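/- arXiv:0711.2444 — 2 statements merged into one kernel-verified Lean document; each statement's English description precedes it below -/
import Mathlib

section
/- In the display sequent calculus for the Lambek–Grishin connectives (with units), the sequent (⊥ ∘− A) ⊸ ⊥ ⊢ A is derivable using the logical rules, the display rules, the identity structural rules for the units, and the Grishin mixed associativity rules Gr1 and Gr1'. -/
/-- Formulas of the Lambek–Grishin calculus with units: atoms, the units 1 and
⊥, the residuated family ⊗, ⊸, ∘− and the dual residuated family ⅋ (par) with
its co-implications ↽ and ⇁. -/
inductive Fm where
  | atom : ℕ → Fm
  | one : Fm                 -- 1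
  | bot : Fm                 -- ⊥
  | tens : Fm → Fm → Fm      -- A ⊗ B
  | limp : Fm → Fm → Fm      -- A ⊸ B
  | rimp : Fm → Fm → Fm      -- A ∘− B
  | par : Fm → Fm → Fm       -- A ⅋ B
  | lcoimp : Fm → Fm → Fm    -- A ↽ B
  | rcoimp : Fm → Fm → Fm    -- A ⇁ B
  deriving DecidableEq

/-- Structures: formulas, the empty structure ε and the structural connectives
∘, <, > . -/
inductive St where
  | of : Fm → St
  | eps : St
  | comma : St → St → St     -- ∘
  | lt : St → St → St        -- <
  | gt : St → St → St        -- >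
  deriving DecidableEq

/-- Derivability in the display sequent calculus. -/
inductive Deriv : St → St → Prop
  -- axiom
  | ax (A : Fm) : Deriv (St.of A) (St.of A)
  -- logical rules for the units
  | lone {Δ} : Deriv St.eps Δ → Deriv (St.of Fm.one) Δ
  | rone : Deriv St.eps (St.of Fm.one)
  | lbot : Deriv (St.of Fm.bot) St.eps
  | rbot {Γ} : Deriv Γ St.eps → Deriv Γ (St.of Fm.bot)
  -- logical rules for ⊗, ⊸, ∘−
  | ltens {A B Δ} : Deriv (St.comma (St.of A) (St.of B)) Δ → Deriv (St.of (Fm.tens A B)) Δ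
  | rtens {A B Γ₁ Γ₂} : Deriv Γ₁ (St.of A) → Deriv Γ₂ (St.of B) →
      Deriv (St.comma Γ₁ Γ₂) (St.of (Fm.tens A B))
  | llimp {A B Γ Δ} : Deriv Γ (St.of A) → Deriv (St.of B) Δ →
      Deriv (St.of (Fm.limp A B)) (St.gt Γ Δ)
  | rlimp {A B Γ} : Deriv Γ (St.gt (St.of A) (St.of B)) → Deriv Γ (St.of (Fm.limp A B))
  | lrimp {A B Γ Δ} : Deriv (St.of A) Δ → Deriv Γ (St.of B) →
      Deriv (St.of (Fm.rimp A B)) (St.lt Δ Γ)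
  | rrimp {A B Γ} : Deriv Γ (St.lt (St.of A) (St.of B)) → Deriv Γ (St.of (Fm.rimp A B))
  -- logical rules for ⅋, ↽, ⇁
  | lpar {A B Δ₁ Δ₂} : Deriv (St.of A) Δ₁ → Deriv (St.of B) Δ₂ →
      Deriv (St.of (Fm.par A B)) (St.comma Δ₁ Δ₂)
  | rpar {A B Γ} : Deriv Γ (St.comma (St.of A) (St.of B)) → Deriv Γ (St.of (Fm.par A B))
  | lrcoimp {A B Δ} : Deriv (St.gt (St.of A) (St.of B)) Δ → Deriv (St.of (Fm.rcoimp A B)) Δ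
  | rrcoimp {A B Γ Δ} : Deriv (St.of A) Δ → Deriv Γ (St.of B) →
      Deriv (St.gt Δ Γ) (St.of (Fm.rcoimp A B))
  | llcoimp {A B Δ} : Deriv (St.lt (St.of A) (St.of B)) Δ → Deriv (St.of (Fm.lcoimp A B)) Δ
  | rlcoimp {A B Γ Δ} : Deriv Γ (St.of A) → Deriv (St.of B) Δ →
      Deriv (St.lt Γ Δ) (St.of (Fm.lcoimp A B))
  -- display rules (residuation): Γ₁ ∘ Γ₂ ⊢ Δ ⇔ Γ₁ ⊢ Δ < Γ₂ ⇔ Γ₂ ⊢ Γ₁ > Δ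
  | rc1 {Γ₁ Γ₂ Δ} : Deriv (St.comma Γ₁ Γ₂) Δ → Deriv Γ₁ (St.lt Δ Γ₂)
  | rc1' {Γ₁ Γ₂ Δ} : Deriv Γ₁ (St.lt Δ Γ₂) → Deriv (St.comma Γ₁ Γ₂) Δ
  | rc2 {Γ₁ Γ₂ Δ} : Deriv (St.comma Γ₁ Γ₂) Δ → Deriv Γ₂ (St.gt Γ₁ Δ)
  | rc2' {Γ₁ Γ₂ Δ} : Deriv Γ₂ (St.gt Γ₁ Δ) → Deriv (St.comma Γ₁ Γ₂) Δ
  -- display rules (dual residuation): Γ ⊢ Δ₁ ∘ Δ₂ ⇔ Γ < Δ₂ ⊢ Δ₁ ⇔ Δ₁ > Γ ⊢ Δ₂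
  | drc1 {Γ Δ₁ Δ₂} : Deriv Γ (St.comma Δ₁ Δ₂) → Deriv (St.lt Γ Δ₂) Δ₁
  | drc1' {Γ Δ₁ Δ₂} : Deriv (St.lt Γ Δ₂) Δ₁ → Deriv Γ (St.comma Δ₁ Δ₂)
  | drc2 {Γ Δ₁ Δ₂} : Deriv Γ (St.comma Δ₁ Δ₂) → Deriv (St.gt Δ₁ Γ) Δ₂
  | drc2' {Γ Δ₁ Δ₂} : Deriv (St.gt Δ₁ Γ) Δ₂ → Deriv Γ (St.comma Δ₁ Δ₂)
  -- identity structural rules for the units (right/left identity, both sides)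
  | idr {Γ Δ} : Deriv (St.comma Γ St.eps) Δ → Deriv Γ Δ
  | idr' {Γ Δ} : Deriv Γ Δ → Deriv (St.comma Γ St.eps) Δ
  | idl {Γ Δ} : Deriv (St.comma St.eps Γ) Δ → Deriv Γ Δ
  | idl' {Γ Δ} : Deriv Γ Δ → Deriv (St.comma St.eps Γ) Δ
  | didr {Γ Δ} : Deriv Γ (St.comma Δ St.eps) → Deriv Γ Δ
  | didr' {Γ Δ} : Deriv Γ Δ → Deriv Γ (St.comma Δ St.eps)
  | didl {Γ Δ} : Deriv Γ (St.comma St.eps Δ) → Deriv Γ Δ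
  | didl' {Γ Δ} : Deriv Γ Δ → Deriv Γ (St.comma St.eps Δ)
  -- Grishin mixed associativity rules Gr1 and Gr1'
  | gr1 {V W X Y} : Deriv (St.comma V W) (St.comma X Y) → Deriv (St.comma (St.gt X V) W) Y
  | gr1' {V W X Y} : Deriv (St.comma (St.gt X V) W) Y → Deriv (St.comma V W) (St.comma X Y)

/-- In the display sequent calculus for the Lambek–Grishin connectives with
units — with the logical rules, the display rules, the identity structural
rules for the units, and the Grishin mixed associativity rules Gr1 and Gr1' —
the sequent (⊥ ∘− A) ⊸ ⊥ ⊢ A is derivable. -/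
theorem grishin_derivable (A : Fm) :
    Deriv (St.of (Fm.limp (Fm.rimp Fm.bot A) Fm.bot)) (St.of A) := by
  -- Step 1: (A > ε) ∘ A ⊢ ε via Grishin Gr1 from ε ∘ A ⊢ A ∘ ε
  have h3 : Deriv (St.comma (St.gt (St.of A) St.eps) (St.of A)) St.eps :=
    Deriv.gr1 (Deriv.idl' (Deriv.didr' (Deriv.ax A)))
  -- Step 2: A > ε ⊢ ⊥ ∘− A
  have h6 : Deriv (St.gt (St.of A) St.eps) (St.of (Fm.rimp Fm.bot A)) :=
    Deriv.rrimp (Deriv.rc1 (Deriv.rbot h3))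
  -- Step 3: (⊥ ∘− A) ⊸ ⊥ ⊢ (A > ε) > ε, then display
  have h8 : Deriv (St.comma (St.gt (St.of A) St.eps)
      (St.of (Fm.limp (Fm.rimp Fm.bot A) Fm.bot))) St.eps :=
    Deriv.rc2' (Deriv.llimp h6 Deriv.lbot)
  -- Step 4: Grishin Gr1' moves A back to the right, then remove units
  exact Deriv.didr (Deriv.idl (Deriv.gr1' h8))
end

section
/- In a proof structure built only from binary links, no tensor link can simultaneously form a contraction redex with two distinct par links; i.e., the redexes of distinct binary contractions are disjoint. -/
/-- A proof structure built from binary links: each link has three ports (its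
premisses and conclusions, with two ports on one side and one on the other),
one of which is designated as main; every vertex is at most once a premiss and
at most once a conclusion of a link.  `kind l = true` means `l` is a tensor
link, `kind l = false` a par link. -/
structure BinaryProofStructure where
  V : Type
  L : Type
  [decV : DecidableEq V]
  prem : L → List V
  concl : L → List V
  kind : L → Bool
  main : L → V
  binary : ∀ l, (prem l).length + (concl l).length = 3
  twoSided : ∀ l, (prem l).length ≤ 2 ∧ (concl l).length ≤ 2
  main_mem : ∀ l, main l ∈ prem l ++ concl l
  ports_nodup : ∀ l, (prem l ++ concl l).Nodup
  prem_unique : ∀ (v : V) (l l' : L), v ∈ prem l → v ∈ prem l' → l = l'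
  concl_unique : ∀ (v : V) (l l' : L), v ∈ concl l → v ∈ concl l' → l = l'

attribute [instance] BinaryProofStructure.decV

namespace BinaryProofStructure

variable (G : BinaryProofStructure)

/-- A tensor link `t` and a par link `p` form a contraction redex when they are
connected, respecting up/down orientation, at all ports of the par link except
its main port: every non-main premiss of `p` is a conclusion of `t` and every
non-main conclusion of `p` is a premiss of `t`. -/
def Redex (t p : G.L) : Prop :=
  G.kind t = true ∧ G.kind p = false ∧
  (∀ v ∈ G.prem p, v ≠ G.main p → v ∈ G.concl t) ∧
  (∀ v ∈ G.concl p, v ≠ G.main p → v ∈ G.prem t)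

end BinaryProofStructure

/-- In a proof structure built only from binary links, no tensor link can
simultaneously form a contraction redex with two distinct par links: the
redexes of distinct binary contractions are disjoint. -/
theorem binary_redexes_disjoint (G : BinaryProofStructure) (t p p' : G.L)
    (h : G.Redex t p) (h' : G.Redex t p') : p = p' := by

  classical
  obtain ⟨_, _, hp1, hp2⟩ := h
  obtain ⟨_, _, hq1, hq2⟩ := h'
  -- ports of a link as a finset
  set T : Finset G.V := (G.prem t ++ G.concl t).toFinset with hT
  have cardT : T.card = 3 := by
    rw [hT, List.toFinset_card_of_nodup (G.ports_nodup t)]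
    simpa using G.binary t
  have mkP : ∀ (q : G.L), ((G.prem q ++ G.concl q).toFinset.erase (G.main q)).card = 2 := by
    intro q
    rw [Finset.card_erase_of_mem (by simpa using G.main_mem q),
      List.toFinset_card_of_nodup (G.ports_nodup q)]
    simp [G.binary q]
  set P : Finset G.V := (G.prem p ++ G.concl p).toFinset.erase (G.main p) with hP
  set P' : Finset G.V := (G.prem p' ++ G.concl p').toFinset.erase (G.main p') with hP'
  have subP : ∀ (q : G.L), (∀ v ∈ G.prem q, v ≠ G.main q → v ∈ G.concl t) →
      (∀ v ∈ G.concl q, v ≠ G.main q → v ∈ G.prem t) →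
      (G.prem q ++ G.concl q).toFinset.erase (G.main q) ⊆ T := by
    intro q h1 h2 v hv
    rw [Finset.mem_erase, List.mem_toFinset, List.mem_append] at hv
    obtain ⟨hne, hmem | hmem⟩ := hv
    · simp only [hT, List.mem_toFinset, List.mem_append]
      exact Or.inr (h1 v hmem hne)
    · simp only [hT, List.mem_toFinset, List.mem_append]
      exact Or.inl (h2 v hmem hne)
  have hPT : P ⊆ T := subP p hp1 hp2
  have hPT' : P' ⊆ T := subP p' hq1 hq2
  -- pigeonhole: P and P' intersect
  have hinter : ∃ v, v ∈ P ∧ v ∈ P' := by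
    by_contra hcon
    push_neg at hcon
    have hdisj : Disjoint P P' := Finset.disjoint_left.mpr (fun {a} ha => hcon a ha)
    have : (P ∪ P').card ≤ T.card := Finset.card_le_card (Finset.union_subset hPT hPT')
    rw [Finset.card_union_of_disjoint hdisj, mkP p, mkP p', cardT] at this
    omega
  obtain ⟨v, hv, hv'⟩ := hinter
  rw [hP, Finset.mem_erase, List.mem_toFinset, List.mem_append] at hv
  rw [hP', Finset.mem_erase, List.mem_toFinset, List.mem_append] at hv'
  obtain ⟨hne, hm | hm⟩ := hv <;> obtain ⟨hne', hm' | hm'⟩ := hv'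
  · exact G.prem_unique v p p' hm hm'
  · -- v ∈ prem p, v ∈ concl p' : v ∈ concl t and v ∈ prem t, contradiction
    have h1 : v ∈ G.concl t := hp1 v hm hne
    have h2 : v ∈ G.prem t := hq2 v hm' hne'
    have := (List.nodup_append'.mp (G.ports_nodup t)).2.2
    exact (this h2 h1).elim
  · have h1 : v ∈ G.prem t := hp2 v hm hne
    have h2 : v ∈ G.concl t := hq1 v hm' hne'
    have := (List.nodup_append'.mp (G.ports_nodup t)).2.2
    exact (this h1 h2).elim
  · exact G.concl_unique v p p' hm hm'
end
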